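/- Let Γ̃ be a p×p positive semidefinite matrix, T a subspace with ker(Γ̃) ∩ T = {0}, and Γ_k → Γ̃, P_{T_k} → P_T. Then Γ_{k,T_k}⁺ → Γ̃_T⁺ (convergence of Moore–Penrose pseudo-inverses), and ‖Γ_{k,T_k}⁺ − Γ̃_T⁺‖ = O(max(‖Γ_k − Γ̃‖, ‖P_{T_k} − P_T‖)). -/

import Mathlib

open Filter Topology

/-- The four Penrose conditions characterizing the Moore–Penrose pseudo-inverse. -/
def IsMoorePenroseInverse {p : ℕ}
    (A B : EuclideanSpace ℝ (Fin p) →L[ℝ] EuclideanSpace ℝ (Fin p)) : Prop :=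
  A ∘L B ∘L A = A ∧ B ∘L A ∘L B = B ∧
    IsSelfAdjoint (A ∘L B) ∧ IsSelfAdjoint (B ∘L A)

/-- Orthogonal projection onto a submodule, as an endomorphism. -/
noncomputable def projCLM {p : ℕ} (T : Submodule ℝ (EuclideanSpace ℝ (Fin p))) :
    EuclideanSpace ℝ (Fin p) →L[ℝ] EuclideanSpace ℝ (Fin p) :=
  T.subtypeL.comp (T.orthogonalProjectionOnto)

variable {p : ℕ}

lemma projCLM_apply_mem (T : Submodule ℝ (EuclideanSpace ℝ (Fin p))) (x) :
    projCLM T x ∈ T := (T.orthogonalProjectionOnto x).2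

lemma projCLM_apply_of_mem (T : Submodule ℝ (EuclideanSpace ℝ (Fin p))) {x} (hx : x ∈ T) :
    projCLM T x = x := by
  simpa [projCLM] using congrArg Subtype.val
    (Submodule.orthogonalProjectionOnto_mem_subspace_eq_self (K := T) ⟨x, hx⟩)

lemma projCLM_isSelfAdjoint (T : Submodule ℝ (EuclideanSpace ℝ (Fin p))) :
    IsSelfAdjoint (projCLM T) := isSelfAdjoint_starProjection T

lemma projCLM_norm_le (T : Submodule ℝ (EuclideanSpace ℝ (Fin p))) (x) :
    ‖projCLM T x‖ ≤ ‖x‖ := by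
  have h1 : ‖projCLM T x‖ = ‖T.orthogonalProjectionOnto x‖ := rfl
  have h2 := (T.orthogonalProjectionOnto).le_opNorm x
  have h3 : ‖(T.orthogonalProjectionOnto : _ →L[ℝ] T)‖ ≤ 1 :=
    Submodule.orthogonalProjectionOnto_norm_le (K := T)
  nlinarith [norm_nonneg x, norm_nonneg (T.orthogonalProjectionOnto x)]

lemma projCLM_idem (T : Submodule ℝ (EuclideanSpace ℝ (Fin p))) :
    projCLM T ∘L projCLM T = projCLM T := by
  ext1 x
  exact projCLM_apply_of_mem T (projCLM_apply_mem T x)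

lemma projCLM_comp_right_of_range_le {T : Submodule ℝ (EuclideanSpace ℝ (Fin p))}
    {f : EuclideanSpace ℝ (Fin p) →L[ℝ] EuclideanSpace ℝ (Fin p)}
    (h : ∀ x, f x ∈ T) : projCLM T ∘L f = f := by
  ext1 x; exact projCLM_apply_of_mem T (h x)

lemma isSelfAdjoint_inner_comm {f : EuclideanSpace ℝ (Fin p) →L[ℝ] EuclideanSpace ℝ (Fin p)}
    (hf : IsSelfAdjoint f) (x y : EuclideanSpace ℝ (Fin p)) :
    (inner ℝ (f x) y : ℝ) = inner ℝ x (f y) := by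
  have := ContinuousLinearMap.adjoint_inner_left f y x
  rw [hf.adjoint_eq] at this
  rw [← this, real_inner_comm]

/-- A self-adjoint idempotent equals the orthogonal projection onto its range. -/
lemma eq_projCLM_of_isSelfAdjoint_idem {Q : EuclideanSpace ℝ (Fin p) →L[ℝ] EuclideanSpace ℝ (Fin p)}
    {T : Submodule ℝ (EuclideanSpace ℝ (Fin p))}
    (hsa : IsSelfAdjoint Q) (hidem : Q ∘L Q = Q) (hrange : LinearMap.range (Q : EuclideanSpace ℝ (Fin p) →ₗ[ℝ] EuclideanSpace ℝ (Fin p)) = T) :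
    Q = projCLM T := by
  ext1 x
  have hm : Q x ∈ T := hrange ▸ LinearMap.mem_range_self Q.toLinearMap x
  symm
  refine Submodule.eq_starProjection_of_mem_of_inner_eq_zero hm fun w hw => ?_
  obtain ⟨z, rfl⟩ := hrange.symm ▸ hw
  have : (inner ℝ (Q (x - Q x)) z : ℝ) = inner ℝ (x - Q x) (Q z) :=
    isSelfAdjoint_inner_comm hsa _ _
  have hQ : Q (x - Q x) = 0 := by
    have := congrArg (fun f : EuclideanSpace ℝ (Fin p) →L[ℝ] EuclideanSpace ℝ (Fin p) => f x) hidem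
    simp only [ContinuousLinearMap.comp_apply] at this
    simp [map_sub, this]
  rw [ContinuousLinearMap.coe_coe, ← this, hQ, inner_zero_left]

/-- For a self-adjoint operator in finite dimensions, range = (ker)ᗮ. -/
lemma range_eq_ker_orthogonal {Q : EuclideanSpace ℝ (Fin p) →L[ℝ] EuclideanSpace ℝ (Fin p)}
    (hsa : IsSelfAdjoint Q) :
    LinearMap.range (Q : EuclideanSpace ℝ (Fin p) →ₗ[ℝ] EuclideanSpace ℝ (Fin p)) = (LinearMap.ker (Q : EuclideanSpace ℝ (Fin p) →ₗ[ℝ] EuclideanSpace ℝ (Fin p)))ᗮ := by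
  have h1 : (LinearMap.range (Q : EuclideanSpace ℝ (Fin p) →ₗ[ℝ] EuclideanSpace ℝ (Fin p)) : Submodule ℝ (EuclideanSpace ℝ (Fin p)))ᗮ = LinearMap.ker (Q : EuclideanSpace ℝ (Fin p) →ₗ[ℝ] EuclideanSpace ℝ (Fin p)) := by
    ext x
    constructor
    · intro hx
      have h : ∀ y, (inner ℝ (Q x) y : ℝ) = 0 := by
        intro y
        rw [isSelfAdjoint_inner_comm hsa, real_inner_comm]
        exact hx _ (LinearMap.mem_range_self Q.toLinearMap y)
      have := h (Q x)
      rwa [inner_self_eq_zero] at this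
    · intro hx
      intro y hy
      obtain ⟨z, rfl⟩ := hy
      rw [ContinuousLinearMap.coe_coe, real_inner_comm, ← isSelfAdjoint_inner_comm hsa]
      simp [show Q x = 0 from LinearMap.mem_ker.mp hx]
  rw [← h1, Submodule.orthogonal_orthogonal]

/-- For a self-adjoint `A` with range `T`, any Moore-Penrose inverse `B` satisfies
`A ∘L B = P_T` and `B ∘L A = P_T`. -/
lemma penrose_proj {A B : EuclideanSpace ℝ (Fin p) →L[ℝ] EuclideanSpace ℝ (Fin p)}
    (hA : IsSelfAdjoint A) {T : Submodule ℝ (EuclideanSpace ℝ (Fin p))}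
    (hrange : LinearMap.range (A : EuclideanSpace ℝ (Fin p) →ₗ[ℝ] EuclideanSpace ℝ (Fin p)) = T) (hP : IsMoorePenroseInverse A B) :
    A ∘L B = projCLM T ∧ B ∘L A = projCLM T := by
  obtain ⟨h1, h2, h3, h4⟩ := hP
  have h1' : ∀ x, A (B (A x)) = A x := fun x => congrArg (fun f : _ →L[ℝ] _ => f x) h1
  have h2' : ∀ x, B (A (B x)) = B x := fun x => congrArg (fun f : _ →L[ℝ] _ => f x) h2
  constructor
  · refine eq_projCLM_of_isSelfAdjoint_idem h3 ?_ ?_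
    · ext1 x
      simp only [ContinuousLinearMap.comp_apply]
      exact congrArg A (h2' x)
    · apply le_antisymm
      · rintro y ⟨x, rfl⟩
        exact hrange ▸ LinearMap.mem_range_self A.toLinearMap _
      · rintro y hy
        obtain ⟨x, rfl⟩ := hrange.symm ▸ hy
        exact ⟨A x, (h1' x).symm ▸ rfl⟩
  · have hker : LinearMap.ker ((B ∘L A) : EuclideanSpace ℝ (Fin p) →ₗ[ℝ] EuclideanSpace ℝ (Fin p)) = LinearMap.ker (A : EuclideanSpace ℝ (Fin p) →ₗ[ℝ] EuclideanSpace ℝ (Fin p)) := by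
      ext x
      simp only [LinearMap.mem_ker, ContinuousLinearMap.coe_comp', Function.comp_apply]
      constructor
      · intro h
        have := h1' x
        rw [show B (A x) = 0 from h, map_zero] at this
        exact this.symm
      · intro h; simp only [ContinuousLinearMap.coe_coe] at h ⊢; rw [ContinuousLinearMap.comp_apply, h, map_zero]
    refine eq_projCLM_of_isSelfAdjoint_idem h4 ?_ ?_
    · ext1 x
      simp only [ContinuousLinearMap.comp_apply]
      exact congrArg B (h1' x)
    · rw [range_eq_ker_orthogonal h4, hker, ← range_eq_ker_orthogonal hA, hrange]

/-- PSD operator: vanishing quadratic form implies vanishing. -/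
lemma psd_apply_eq_zero {f : EuclideanSpace ℝ (Fin p) →L[ℝ] EuclideanSpace ℝ (Fin p)}
    (hsa : IsSelfAdjoint f) (hpsd : ∀ v, 0 ≤ (inner ℝ (f v) v : ℝ)) {x}
    (h : (inner ℝ (f x) x : ℝ) = 0) : f x = 0 := by
  have key : ∀ y : EuclideanSpace ℝ (Fin p), (inner ℝ (f x) y : ℝ) = 0 := by
    intro y
    set c : ℝ := inner ℝ (f x) y with hc
    set Bq : ℝ := inner ℝ (f y) y with hB
    have hB0 : 0 ≤ Bq := hpsd y
    have expand : ∀ t : ℝ, 0 ≤ Bq * t ^ 2 + 2 * c * t := by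
      intro t
      have h0 := hpsd (x + t • y)
      have hfyx : (inner ℝ (f y) x : ℝ) = c := by
        rw [isSelfAdjoint_inner_comm hsa y x, real_inner_comm, hc]
      rw [map_add, map_smul, inner_add_left, inner_add_right, inner_add_right,
        inner_smul_left, inner_smul_right, inner_smul_left, inner_smul_right, h, hfyx] at h0
      simp only [RCLike.conj_to_real] at h0
      nlinarith [h0]
    have ht := expand (-c / (Bq + 1))
    have hBq1 : (0:ℝ) < Bq + 1 := by linarith
    rw [div_pow, neg_pow] at ht
    have h2 : 0 ≤ (Bq * (c ^ 2 / (Bq + 1) ^ 2) + 2 * c * (-c / (Bq + 1))) * (Bq + 1)^2 := by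
      have := mul_nonneg ht (le_of_lt (pow_pos hBq1 2))
      convert this using 2
      · rfl
      ring
    have h3 : 0 ≤ Bq * c^2 - 2 * c^2 * (Bq + 1) := by
      have e : (Bq * (c ^ 2 / (Bq + 1) ^ 2) + 2 * c * (-c / (Bq + 1))) * (Bq + 1)^2
          = Bq * c^2 - 2 * c^2 * (Bq + 1) := by
        field_simp
        ring
      linarith [e ▸ h2]
    nlinarith [sq_nonneg c]
  have := key (f x)
  rwa [inner_self_eq_zero] at this

/-- Coercivity of a PSD operator on a subspace trivially intersecting its kernel. -/
lemma exists_coercive {f : EuclideanSpace ℝ (Fin p) →L[ℝ] EuclideanSpace ℝ (Fin p)}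
    (hsa : IsSelfAdjoint f) (hpsd : ∀ v, 0 ≤ (inner ℝ (f v) v : ℝ))
    {T : Submodule ℝ (EuclideanSpace ℝ (Fin p))} (hker : LinearMap.ker (f : EuclideanSpace ℝ (Fin p) →ₗ[ℝ] EuclideanSpace ℝ (Fin p)) ⊓ T = ⊥) :
    ∃ c > (0:ℝ), ∀ x ∈ T, c * ‖x‖ ^ 2 ≤ (inner ℝ (f x) x : ℝ) := by
  have hpos : ∀ x ∈ T, x ≠ 0 → 0 < (inner ℝ (f x) x : ℝ) := by
    intro x hx hx0
    rcases lt_or_eq_of_le (hpsd x) with h | h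
    · exact h
    · exfalso
      have hfx : f x = 0 := psd_apply_eq_zero hsa hpsd h.symm
      have : x ∈ LinearMap.ker (f : EuclideanSpace ℝ (Fin p) →ₗ[ℝ] EuclideanSpace ℝ (Fin p)) ⊓ T := ⟨LinearMap.mem_ker.mpr hfx, hx⟩
      rw [hker] at this
      exact hx0 this
  set S : Set (EuclideanSpace ℝ (Fin p)) := (T : Set _) ∩ Metric.sphere 0 1 with hS
  have hScpt : IsCompact S :=
    (isCompact_sphere (0 : EuclideanSpace ℝ (Fin p)) 1).inter_left
      (Submodule.closed_of_finiteDimensional T)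
  have hfc : Continuous fun x : EuclideanSpace ℝ (Fin p) => (inner ℝ (f x) x : ℝ) :=
    (f.continuous.inner continuous_id)
  rcases S.eq_empty_or_nonempty with hSe | hSne
  · refine ⟨1, one_pos, fun x hx => ?_⟩
    by_cases hx0 : x = 0
    · simp [hx0]
    · exfalso
      have : (‖x‖⁻¹ • x) ∈ S := by
        constructor
        · exact T.smul_mem _ hx
        · simp [norm_smul, norm_ne_zero_iff.mpr hx0, abs_of_nonneg (inv_nonneg.mpr (norm_nonneg x)),
            inv_mul_cancel₀ (norm_ne_zero_iff.mpr hx0)]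
      rw [hSe] at this; exact this
  · obtain ⟨x₀, hx₀S, hmin⟩ := hScpt.exists_isMinOn hSne hfc.continuousOn
    have hx₀T : x₀ ∈ T := hx₀S.1
    have hx₀n : ‖x₀‖ = 1 := by simpa using hx₀S.2
    have hx₀0 : x₀ ≠ 0 := by intro h; rw [h] at hx₀n; simp at hx₀n
    refine ⟨inner ℝ (f x₀) x₀, hpos x₀ hx₀T hx₀0, fun x hx => ?_⟩
    by_cases hx0 : x = 0
    · simp [hx0]
    · have hxn : ‖x‖ ≠ 0 := norm_ne_zero_iff.mpr hx0
      set u := ‖x‖⁻¹ • x with hu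
      have huS : u ∈ S := by
        constructor
        · exact T.smul_mem _ hx
        · simp [hu, norm_smul, abs_of_nonneg (inv_nonneg.mpr (norm_nonneg x)),
            inv_mul_cancel₀ hxn]
      have hmin' := hmin huS
      have hquad : (inner ℝ (f u) u : ℝ) = ‖x‖⁻¹ ^ 2 * inner ℝ (f x) x := by
        rw [hu, map_smul, inner_smul_left, inner_smul_right]
        simp only [RCLike.conj_to_real]
        ring
      have : (inner ℝ (f x₀) x₀ : ℝ) ≤ ‖x‖⁻¹ ^ 2 * inner ℝ (f x) x := hquad ▸ hmin'
      have hn2 : (0:ℝ) < ‖x‖ ^ 2 := by positivity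
      rw [inv_pow] at this
      calc (inner ℝ (f x₀) x₀ : ℝ) * ‖x‖ ^ 2 ≤ ((‖x‖ ^ 2)⁻¹ * inner ℝ (f x) x) * ‖x‖ ^ 2 := by
            exact mul_le_mul_of_nonneg_right this (le_of_lt hn2)
        _ = inner ℝ (f x) x := by field_simp

lemma restricted_isSelfAdjoint {g : EuclideanSpace ℝ (Fin p) →L[ℝ] EuclideanSpace ℝ (Fin p)}
    (hgsa : IsSelfAdjoint g) (T : Submodule ℝ (EuclideanSpace ℝ (Fin p))) :
    IsSelfAdjoint (projCLM T ∘L g ∘L projCLM T) := by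
  rw [ContinuousLinearMap.isSelfAdjoint_iff'] at *
  rw [ContinuousLinearMap.adjoint_comp, ContinuousLinearMap.adjoint_comp, hgsa,
    (projCLM_isSelfAdjoint T).adjoint_eq, ContinuousLinearMap.comp_assoc]

lemma restricted_inner {g : EuclideanSpace ℝ (Fin p) →L[ℝ] EuclideanSpace ℝ (Fin p)}
    {T : Submodule ℝ (EuclideanSpace ℝ (Fin p))} {x : EuclideanSpace ℝ (Fin p)} (hx : x ∈ T) :
    (inner ℝ ((projCLM T ∘L g ∘L projCLM T) x) x : ℝ) = inner ℝ (g x) x := by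
  simp only [ContinuousLinearMap.comp_apply, projCLM_apply_of_mem T hx]
  rw [isSelfAdjoint_inner_comm (projCLM_isSelfAdjoint T), projCLM_apply_of_mem T hx]

lemma restricted_range {g : EuclideanSpace ℝ (Fin p) →L[ℝ] EuclideanSpace ℝ (Fin p)}
    {T : Submodule ℝ (EuclideanSpace ℝ (Fin p))} {c : ℝ} (hc : 0 < c)
    (hcoer : ∀ x ∈ T, c * ‖x‖ ^ 2 ≤ (inner ℝ (g x) x : ℝ)) :
    LinearMap.range ((projCLM T ∘L g ∘L projCLM T) : EuclideanSpace ℝ (Fin p) →ₗ[ℝ] EuclideanSpace ℝ (Fin p)) = T := by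
  set A := projCLM T ∘L g ∘L projCLM T with hA
  have hmem : ∀ x, A x ∈ T := fun x => projCLM_apply_mem T _
  have hinj : ∀ x ∈ T, A x = 0 → x = 0 := by
    intro x hx h0
    have h1 := hcoer x hx
    rw [← restricted_inner (g := g) hx, h0, inner_zero_left] at h1
    have : ‖x‖ ^ 2 ≤ 0 := by nlinarith
    have : ‖x‖ = 0 := by nlinarith [sq_nonneg ‖x‖, norm_nonneg x]
    exact norm_eq_zero.mp this
  -- restriction to T is injective hence surjective
  have hmapsto : ∀ x ∈ T, A.toLinearMap x ∈ T := fun x _ => hmem x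
  set r : T →ₗ[ℝ] T := LinearMap.restrict A.toLinearMap hmapsto with hr
  have hrinj : Function.Injective r := by
    intro ⟨x, hx⟩ ⟨y, hy⟩ hxy
    have : A x - A y = 0 := by
      have := congrArg Subtype.val hxy
      simp only [hr, LinearMap.restrict_apply] at this
      simp [sub_eq_zero]
      exact this
    have hsub : A (x - y) = 0 := by rw [map_sub, this]
    have := hinj (x - y) (T.sub_mem hx hy) hsub
    exact Subtype.ext (by rwa [sub_eq_zero] at this)
  have hrsurj : Function.Surjective r := (LinearMap.injective_iff_surjective).mp hrinj
  apply le_antisymm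
  · rintro y ⟨x, rfl⟩
    exact hmem x
  · intro y hy
    obtain ⟨⟨x, hx⟩, hxy⟩ := hrsurj ⟨y, hy⟩
    exact ⟨x, by simpa [hr, LinearMap.restrict_apply] using congrArg Subtype.val hxy⟩

/-- The full package: for coercive `g` on `T`, a Penrose inverse `B` of `P g P` satisfies
the projection identities and the norm bound `‖B‖ ≤ 1/c`. -/
lemma penrose_package {g B : EuclideanSpace ℝ (Fin p) →L[ℝ] EuclideanSpace ℝ (Fin p)}
    (hgsa : IsSelfAdjoint g) {T : Submodule ℝ (EuclideanSpace ℝ (Fin p))} {c : ℝ} (hc : 0 < c)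
    (hcoer : ∀ x ∈ T, c * ‖x‖ ^ 2 ≤ (inner ℝ (g x) x : ℝ))
    (hP : IsMoorePenroseInverse (projCLM T ∘L g ∘L projCLM T) B) :
    (projCLM T ∘L g ∘L projCLM T) ∘L B = projCLM T ∧
    B ∘L (projCLM T ∘L g ∘L projCLM T) = projCLM T ∧
    projCLM T ∘L B = B ∧ B ∘L projCLM T = B ∧ ‖B‖ ≤ 1 / c := by
  set A := projCLM T ∘L g ∘L projCLM T with hA
  have hAsa : IsSelfAdjoint A := restricted_isSelfAdjoint hgsa T
  have hrange : LinearMap.range (A : EuclideanSpace ℝ (Fin p) →ₗ[ℝ] EuclideanSpace ℝ (Fin p)) = T := restricted_range hc hcoer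
  obtain ⟨hAB, hBA⟩ := penrose_proj hAsa hrange hP
  obtain ⟨h1, h2, h3, h4⟩ := hP
  have hPB : projCLM T ∘L B = B := by
    calc projCLM T ∘L B = (B ∘L A) ∘L B := by rw [hBA]
      _ = B := by rw [ContinuousLinearMap.comp_assoc]; exact h2
  have hBP : B ∘L projCLM T = B := by
    calc B ∘L projCLM T = B ∘L (A ∘L B) := by rw [hAB]
      _ = B := h2
  refine ⟨hAB, hBA, hPB, hBP, ?_⟩
  apply ContinuousLinearMap.opNorm_le_bound _ (by positivity)
  intro y
  set z := B y with hz
  have hzT : z ∈ T := by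
    have h : projCLM T (B y) = B y := congrArg (fun f : _ →L[ℝ] _ => f y) hPB
    show B y ∈ T
    rw [← h]; exact projCLM_apply_mem T _
  have h5 : c * ‖z‖ ^ 2 ≤ (inner ℝ (g z) z : ℝ) := hcoer z hzT
  have h6 : (inner ℝ (g z) z : ℝ) = inner ℝ (A z) z := (restricted_inner hzT).symm
  have h7 : A z = projCLM T y := congrArg (fun f : _ →L[ℝ] _ => f y) hAB
  have h8 : (inner ℝ (projCLM T y) z : ℝ) ≤ ‖y‖ * ‖z‖ := by
    calc (inner ℝ (projCLM T y) z : ℝ) ≤ ‖projCLM T y‖ * ‖z‖ := real_inner_le_norm _ _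
      _ ≤ ‖y‖ * ‖z‖ := mul_le_mul_of_nonneg_right (projCLM_norm_le T y) (norm_nonneg z)
  have h9 : c * ‖z‖ ^ 2 ≤ ‖y‖ * ‖z‖ := by rw [h6, h7] at h5; linarith
  by_cases hz0 : z = 0
  · rw [hz0]; simp; positivity
  · have hzn : 0 < ‖z‖ := norm_pos_iff.mpr hz0
    rw [div_mul_eq_mul_div, le_div_iff₀ hc]
    nlinarith

/-- Coercivity transfers to nearby operators and subspaces. -/
lemma coercive_perturb {Γt G : EuclideanSpace ℝ (Fin p) →L[ℝ] EuclideanSpace ℝ (Fin p)}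
    {T T' : Submodule ℝ (EuclideanSpace ℝ (Fin p))} {c : ℝ} (hc : 0 < c)
    (hcoer : ∀ x ∈ T, c * ‖x‖ ^ 2 ≤ (inner ℝ (Γt x) x : ℝ))
    (hη : ‖G - Γt‖ ≤ c / (2 * (2 * c + 3 * ‖Γt‖ + 1)))
    (hδ : ‖projCLM T' - projCLM T‖ ≤ c / (2 * (2 * c + 3 * ‖Γt‖ + 1))) :
    ∀ x ∈ T', c / 2 * ‖x‖ ^ 2 ≤ (inner ℝ (G x) x : ℝ) := by
  obtain ⟨M, hM⟩ : ∃ y, y = ‖Γt‖ := ⟨_, rfl⟩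
  obtain ⟨ε, hε⟩ : ∃ y, y = c / (2 * (2 * c + 3 * M + 1)) := ⟨_, rfl⟩
  rw [← hM, ← hε] at hη hδ
  have hM0 : 0 ≤ M := hM ▸ norm_nonneg _
  have hden : (0:ℝ) < 2 * (2 * c + 3 * M + 1) := by linarith
  have hε0 : 0 < ε := hε ▸ div_pos hc hden
  have hεle : ε ≤ 1 := by rw [hε, div_le_one hden]; linarith
  have hεid : (2 * c + 3 * M + 1) * ε = c / 2 := by
    rw [hε]; field_simp
  intro x hx
  obtain ⟨n, hn⟩ : ∃ y, y = ‖x‖ := ⟨_, rfl⟩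
  have hn0 : 0 ≤ n := hn ▸ norm_nonneg x
  obtain ⟨Px, hPx⟩ : ∃ y, y = projCLM T x := ⟨_, rfl⟩
  obtain ⟨e, he⟩ : ∃ y, y = x - Px := ⟨_, rfl⟩
  have hxd : x = Px + e := by rw [he]; abel
  have hxQ : projCLM T' x = x := projCLM_apply_of_mem T' hx
  have hee : e = (projCLM T' - projCLM T) x := by
    rw [ContinuousLinearMap.sub_apply, hxQ, he, hPx]
  have hen : ‖e‖ ≤ ε * n := by
    rw [hee, hn]
    calc ‖(projCLM T' - projCLM T) x‖ ≤ ‖projCLM T' - projCLM T‖ * ‖x‖ :=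
      (projCLM T' - projCLM T).le_opNorm x
      _ ≤ ε * ‖x‖ := mul_le_mul_of_nonneg_right hδ (norm_nonneg x)
  have hen0 : 0 ≤ ‖e‖ := norm_nonneg e
  have hPxn : ‖Px‖ ≤ n := by rw [hPx, hn]; exact projCLM_norm_le T x
  have hPx0 : 0 ≤ ‖Px‖ := norm_nonneg Px
  have hPxlow : n - ‖e‖ ≤ ‖Px‖ := by
    have h1 : n ≤ ‖Px‖ + ‖e‖ := by
      rw [hn, hxd]; exact norm_add_le _ _
    linarith
  have hbd : ∀ u v : EuclideanSpace ℝ (Fin p), |(inner ℝ (Γt u) v : ℝ)| ≤ M * ‖u‖ * ‖v‖ := by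
    intro u v
    rw [hM]
    calc |(inner ℝ (Γt u) v : ℝ)| ≤ ‖Γt u‖ * ‖v‖ := abs_real_inner_le_norm _ _
      _ ≤ ‖Γt‖ * ‖u‖ * ‖v‖ := mul_le_mul_of_nonneg_right (Γt.le_opNorm u) (norm_nonneg v)
  have hexpand : (inner ℝ (Γt x) x : ℝ) =
      inner ℝ (Γt Px) Px + inner ℝ (Γt Px) e + inner ℝ (Γt e) Px + inner ℝ (Γt e) e := by
    rw [hxd, map_add, inner_add_left, inner_add_right, inner_add_right]
    ring
  have hcoerPx : c * ‖Px‖ ^ 2 ≤ (inner ℝ (Γt Px) Px : ℝ) := by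
    rw [hPx]; exact hcoer _ (projCLM_apply_mem T x)
  have hMne : M * ‖Px‖ * ‖e‖ ≤ M * n * ‖e‖ :=
    mul_le_mul_of_nonneg_right (mul_le_mul_of_nonneg_left hPxn hM0) hen0
  have hcross1 : -(M * n * ‖e‖) ≤ (inner ℝ (Γt Px) e : ℝ) := by
    have h1 := hbd Px e; rw [abs_le] at h1; linarith
  have hcross2 : -(M * n * ‖e‖) ≤ (inner ℝ (Γt e) Px : ℝ) := by
    have h1 := hbd e Px; rw [abs_le] at h1
    have h2 : M * ‖e‖ * ‖Px‖ ≤ M * n * ‖e‖ := by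
      calc M * ‖e‖ * ‖Px‖ = M * ‖Px‖ * ‖e‖ := by ring
        _ ≤ M * n * ‖e‖ := hMne
    linarith
  have hcross3 : -(M * ‖e‖ * ‖e‖) ≤ (inner ℝ (Γt e) e : ℝ) := by
    have h1 := hbd e e; rw [abs_le] at h1; linarith
  have hGd : -(ε * n ^ 2) ≤ (inner ℝ ((G - Γt) x) x : ℝ) := by
    have h1 : |(inner ℝ ((G - Γt) x) x : ℝ)| ≤ ‖(G - Γt) x‖ * ‖x‖ := abs_real_inner_le_norm _ _
    have h2 : ‖(G - Γt) x‖ ≤ ‖G - Γt‖ * ‖x‖ := (G - Γt).le_opNorm x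
    have h3 : ‖G - Γt‖ * ‖x‖ ≤ ε * ‖x‖ := mul_le_mul_of_nonneg_right hη (norm_nonneg x)
    rw [abs_le] at h1
    have h4 : ε * ‖x‖ * ‖x‖ = ε * n ^ 2 := by rw [hn]; ring
    nlinarith [norm_nonneg ((G - Γt) x), norm_nonneg x]
  have hsplit : (inner ℝ (G x) x : ℝ) = inner ℝ ((G - Γt) x) x + inner ℝ (Γt x) x := by
    rw [ContinuousLinearMap.sub_apply, inner_sub_left]; ring
  -- lower bound on ‖Px‖²
  have hlow2 : (1 - ε) * n ≤ ‖Px‖ := by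
    have h1 : n - ε * n ≤ n - ‖e‖ := by linarith
    calc (1 - ε) * n = n - ε * n := by ring
      _ ≤ n - ‖e‖ := h1
      _ ≤ ‖Px‖ := hPxlow
  have hlow2' : 0 ≤ (1 - ε) * n := mul_nonneg (by linarith) hn0
  have hpx2 : ((1 - ε) * n) ^ 2 ≤ ‖Px‖ ^ 2 := pow_le_pow_left₀ hlow2' hlow2 2
  have hcpx : c * ((1 - ε) * n) ^ 2 ≤ c * ‖Px‖ ^ 2 :=
    mul_le_mul_of_nonneg_left hpx2 (le_of_lt hc)
  have hen2 : M * ‖e‖ * ‖e‖ ≤ M * ε * n ^ 2 := by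
    have h1 : ‖e‖ * ‖e‖ ≤ (ε * n) * (ε * n) := mul_le_mul hen hen hen0 (by positivity)
    have h2 : (ε * n) * (ε * n) ≤ ε * n ^ 2 := by
      calc (ε * n) * (ε * n) = ε * (ε * n ^ 2) := by ring
        _ ≤ 1 * (ε * n ^ 2) := mul_le_mul_of_nonneg_right hεle (by positivity)
        _ = ε * n ^ 2 := by ring
    have h3 : ‖e‖ * ‖e‖ ≤ ε * n ^ 2 := le_trans h1 h2
    calc M * ‖e‖ * ‖e‖ = M * (‖e‖ * ‖e‖) := by ring
      _ ≤ M * (ε * n ^ 2) := mul_le_mul_of_nonneg_left h3 hM0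
      _ = M * ε * n ^ 2 := by ring
  have henn : M * n * ‖e‖ ≤ M * ε * n ^ 2 := by
    have h1 : n * ‖e‖ ≤ n * (ε * n) := mul_le_mul_of_nonneg_left hen hn0
    calc M * n * ‖e‖ = M * (n * ‖e‖) := by ring
      _ ≤ M * (n * (ε * n)) := mul_le_mul_of_nonneg_left h1 hM0
      _ = M * ε * n ^ 2 := by ring
  have hfinal : c / 2 * n ^ 2 ≤
      c * ((1 - ε) * n) ^ 2 - 3 * (M * ε * n ^ 2) - ε * n ^ 2 := by
    have h1 : (2 * c + 3 * M + 1) * ε * n ^ 2 = c / 2 * n ^ 2 := by rw [hεid]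
    have h2 : 0 ≤ c * (ε ^ 2 * n ^ 2) := by positivity
    linarith [h1, h2]
  rw [← hn, hsplit, hexpand]
  linarith

lemma projCLM_opNorm_le (T : Submodule ℝ (EuclideanSpace ℝ (Fin p))) : ‖projCLM T‖ ≤ 1 :=
  ContinuousLinearMap.opNorm_le_bound _ zero_le_one fun x => by
    rw [one_mul]; exact projCLM_norm_le T x

lemma norm_sub_projCLM_le (T : Submodule ℝ (EuclideanSpace ℝ (Fin p))) (x) :
    ‖x - projCLM T x‖ ≤ ‖x‖ := by
  have horth : x - projCLM T x ∈ Tᗮ := Submodule.sub_starProjection_mem_orthogonal x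
  have hinner : (inner ℝ (projCLM T x) (x - projCLM T x) : ℝ) = 0 :=
    horth (projCLM T x) (projCLM_apply_mem T x)
  have hsum : projCLM T x + (x - projCLM T x) = x := by abel
  have hsq := norm_add_sq_real (projCLM T x) (x - projCLM T x)
  rw [hsum, hinner] at hsq
  have h1 : ‖x - projCLM T x‖ ^ 2 ≤ ‖x‖ ^ 2 := by nlinarith [sq_nonneg ‖projCLM T x‖]
  exact le_of_pow_le_pow_left₀ two_ne_zero (norm_nonneg x) h1

lemma comp_norm_le₂ {f g : EuclideanSpace ℝ (Fin p) →L[ℝ] EuclideanSpace ℝ (Fin p)}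
    {a b : ℝ} (hf : ‖f‖ ≤ a) (hg : ‖g‖ ≤ b) (ha : 0 ≤ a) : ‖f ∘L g‖ ≤ a * b :=
  le_trans (ContinuousLinearMap.opNorm_comp_le f g) (mul_le_mul hf hg (norm_nonneg g) ha)

/-- Convergence of pseudo-inverses of restricted covariances, with the Lipschitz-type
bound (18) of the paper. -/
theorem pseudo_inverse_convergence {p : ℕ}
    (Γ : ℕ → EuclideanSpace ℝ (Fin p) →L[ℝ] EuclideanSpace ℝ (Fin p))
    (Γt : EuclideanSpace ℝ (Fin p) →L[ℝ] EuclideanSpace ℝ (Fin p))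
    (hΓksym : ∀ k, IsSelfAdjoint (Γ k)) (hΓkpsd : ∀ k v, 0 ≤ (inner ℝ (Γ k v) v : ℝ))
    (hΓsym : IsSelfAdjoint Γt) (hΓpsd : ∀ v, 0 ≤ (inner ℝ (Γt v) v : ℝ))
    (hΓ : Tendsto Γ atTop (𝓝 Γt))
    (Tk : ℕ → Submodule ℝ (EuclideanSpace ℝ (Fin p)))
    (T : Submodule ℝ (EuclideanSpace ℝ (Fin p)))
    (hT : Tendsto (fun k => projCLM (Tk k)) atTop (𝓝 (projCLM T)))
    (hker : LinearMap.ker (Γt : EuclideanSpace ℝ (Fin p) →ₗ[ℝ] EuclideanSpace ℝ (Fin p)) ⊓ T = ⊥)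
    (B : ℕ → EuclideanSpace ℝ (Fin p) →L[ℝ] EuclideanSpace ℝ (Fin p))
    (Bt : EuclideanSpace ℝ (Fin p) →L[ℝ] EuclideanSpace ℝ (Fin p))
    (hB : ∀ k, IsMoorePenroseInverse (projCLM (Tk k) ∘L Γ k ∘L projCLM (Tk k)) (B k))
    (hBt : IsMoorePenroseInverse (projCLM T ∘L Γt ∘L projCLM T) Bt) :
    Tendsto B atTop (𝓝 Bt) ∧
    ∃ C > (0:ℝ), ∃ K, ∀ k ≥ K,
      ‖B k - Bt‖ ≤ C * max ‖Γ k - Γt‖ ‖projCLM (Tk k) - projCLM T‖ := by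

  obtain ⟨c, hc, hcoer⟩ := exists_coercive hΓsym hΓpsd hker
  obtain ⟨hABt, hBAt, hPBt, hBtP, hBtnorm⟩ := penrose_package hΓsym hc hcoer hBt
  obtain ⟨ε, hεdef⟩ : ∃ y, y = c / (2 * (2 * c + 3 * ‖Γt‖ + 1)) := ⟨_, rfl⟩
  have hM0 : (0:ℝ) ≤ ‖Γt‖ := norm_nonneg _
  have hden : (0:ℝ) < 2 * (2 * c + 3 * ‖Γt‖ + 1) := by linarith
  have hε0 : 0 < ε := hεdef ▸ div_pos hc hden
  have hεle : ε ≤ 1 := by rw [hεdef, div_le_one hden]; linarith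
  have hconv : ∀ r > (0:ℝ), ∃ K, ∀ k ≥ K,
      ‖Γ k - Γt‖ ≤ r ∧ ‖projCLM (Tk k) - projCLM T‖ ≤ r := by
    intro r hr
    obtain ⟨K1, h1⟩ := Metric.tendsto_atTop.mp hΓ r hr
    obtain ⟨K2, h2⟩ := Metric.tendsto_atTop.mp hT r hr
    refine ⟨max K1 K2, fun k hk => ⟨?_, ?_⟩⟩
    · have := h1 k (le_trans (le_max_left _ _) hk)
      rw [dist_eq_norm] at this; linarith
    · have := h2 k (le_trans (le_max_right _ _) hk)
      rw [dist_eq_norm] at this; linarith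
  obtain ⟨K, hK⟩ := hconv ε hε0
  obtain ⟨b1, hb1⟩ : ∃ y, y = 1 / (c / 2) := ⟨_, rfl⟩
  obtain ⟨bc, hbc⟩ : ∃ y, y = 1 / c := ⟨_, rfl⟩
  have hb1p : 0 < b1 := by rw [hb1]; positivity
  have hbcp : 0 < bc := by rw [hbc]; positivity
  obtain ⟨C, hCdef⟩ : ∃ y, y = b1 * ((2 * ‖Γt‖ + 2) * bc) + bc + b1 + 1 := ⟨_, rfl⟩
  have hC0 : 0 < C := by rw [hCdef]; positivity
  have key : ∀ k ≥ K, ‖B k - Bt‖ ≤ C * max ‖Γ k - Γt‖ ‖projCLM (Tk k) - projCLM T‖ := by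
    intro k hk
    obtain ⟨hηk, hδk⟩ := hK k hk
    have hηk' : ‖Γ k - Γt‖ ≤ c / (2 * (2 * c + 3 * ‖Γt‖ + 1)) := hεdef ▸ hηk
    have hδk' : ‖projCLM (Tk k) - projCLM T‖ ≤ c / (2 * (2 * c + 3 * ‖Γt‖ + 1)) := hεdef ▸ hδk
    have hcoerk := coercive_perturb hc hcoer hηk' hδk'
    obtain ⟨hABk, hBAk, hPBk, hBkP, hBknorm⟩ :=
      penrose_package (hΓksym k) (half_pos hc) hcoerk (hB k)
    rw [← hb1] at hBknorm
    rw [← hbc] at hBtnorm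
    obtain ⟨m, hm⟩ : ∃ y, y = max ‖Γ k - Γt‖ ‖projCLM (Tk k) - projCLM T‖ := ⟨_, rfl⟩
    have hηm : ‖Γ k - Γt‖ ≤ m := hm ▸ le_max_left _ _
    have hδm : ‖projCLM (Tk k) - projCLM T‖ ≤ m := hm ▸ le_max_right _ _
    have hm0 : 0 ≤ m := le_trans (norm_nonneg _) hηm
    set Pk := projCLM (Tk k) with hPkdef
    set P := projCLM T with hPdef
    set Ak := Pk ∘L Γ k ∘L Pk with hAkdef
    set A := P ∘L Γt ∘L P with hAdef
    -- the fundamental identity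
    have e1 : B k ∘L ((A - Ak) ∘L Bt) = B k ∘L P - Pk ∘L Bt := by
      rw [ContinuousLinearMap.sub_comp, ContinuousLinearMap.comp_sub, hABt,
        ← ContinuousLinearMap.comp_assoc, hBAk]
    have e2 : (Pk - P) ∘L Bt = Pk ∘L Bt - Bt := by
      rw [ContinuousLinearMap.sub_comp, hPBt]
    have e3 : B k ∘L (Pk - Pk ∘L P) = B k - B k ∘L P := by
      rw [ContinuousLinearMap.comp_sub, hBkP, ← ContinuousLinearMap.comp_assoc, hBkP]
    have hid : B k - Bt =
        (B k ∘L ((A - Ak) ∘L Bt)) + ((Pk - P) ∘L Bt) + (B k ∘L (Pk - Pk ∘L P)) := by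
      rw [e1, e2, e3]; abel
    -- norm bound on the pieces
    have hΓknorm : ‖Γ k‖ ≤ ‖Γt‖ + 1 := by
      have h1 : ‖Γ k‖ ≤ ‖Γ k - Γt‖ + ‖Γt‖ := by
        calc ‖Γ k‖ = ‖(Γ k - Γt) + Γt‖ := by congr 1; abel
          _ ≤ ‖Γ k - Γt‖ + ‖Γt‖ := norm_add_le _ _
      linarith [hηk, hεle]
    have hsplitA : Ak - A = ((Pk - P) ∘L (Γ k ∘L Pk)) + (P ∘L ((Γ k - Γt) ∘L Pk))
        + (P ∘L (Γt ∘L (Pk - P))) := by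
      ext1 x
      simp only [ContinuousLinearMap.sub_apply, ContinuousLinearMap.comp_apply,
        ContinuousLinearMap.add_apply, map_sub]
      abel
    have hP1 : ‖P‖ ≤ 1 := projCLM_opNorm_le T
    have hPk1 : ‖Pk‖ ≤ 1 := projCLM_opNorm_le (Tk k)
    have hAkA : ‖Ak - A‖ ≤ (2 * ‖Γt‖ + 2) * m := by
      have t1 : ‖(Pk - P) ∘L (Γ k ∘L Pk)‖ ≤ m * ((‖Γt‖ + 1) * 1) :=
        comp_norm_le₂ hδm (comp_norm_le₂ hΓknorm hPk1 (by linarith)) hm0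
      have t2 : ‖P ∘L ((Γ k - Γt) ∘L Pk)‖ ≤ 1 * (m * 1) :=
        comp_norm_le₂ hP1 (comp_norm_le₂ hηm hPk1 hm0) zero_le_one
      have t3 : ‖P ∘L (Γt ∘L (Pk - P))‖ ≤ 1 * (‖Γt‖ * m) :=
        comp_norm_le₂ hP1 (comp_norm_le₂ (le_refl _) hδm hM0) zero_le_one
      have tri : ‖(Pk - P) ∘L (Γ k ∘L Pk) + P ∘L ((Γ k - Γt) ∘L Pk) + P ∘L (Γt ∘L (Pk - P))‖
          ≤ ‖(Pk - P) ∘L (Γ k ∘L Pk)‖ + ‖P ∘L ((Γ k - Γt) ∘L Pk)‖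
            + ‖P ∘L (Γt ∘L (Pk - P))‖ := by
        have u1 := norm_add_le ((Pk - P) ∘L (Γ k ∘L Pk) + P ∘L ((Γ k - Γt) ∘L Pk))
          (P ∘L (Γt ∘L (Pk - P)))
        have u2 := norm_add_le ((Pk - P) ∘L (Γ k ∘L Pk)) (P ∘L ((Γ k - Γt) ∘L Pk))
        linarith
      calc ‖Ak - A‖ ≤ ‖(Pk - P) ∘L (Γ k ∘L Pk)‖ + ‖P ∘L ((Γ k - Γt) ∘L Pk)‖
            + ‖P ∘L (Γt ∘L (Pk - P))‖ := by rw [hsplitA]; exact tri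
        _ ≤ m * ((‖Γt‖ + 1) * 1) + 1 * (m * 1) + 1 * (‖Γt‖ * m) := by linarith
        _ = (2 * ‖Γt‖ + 2) * m := by ring
    have hthird : ‖Pk - Pk ∘L P‖ ≤ m := by
      refine le_trans (ContinuousLinearMap.opNorm_le_bound _ (norm_nonneg (Pk - P)) ?_) hδm
      intro x
      have h1 : (Pk - Pk ∘L P) x = (Pk - P) (x - P x) := by
        simp only [ContinuousLinearMap.sub_apply, ContinuousLinearMap.comp_apply, map_sub]
        rw [hPdef, projCLM_apply_of_mem T (projCLM_apply_mem T x)]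
        abel
      rw [h1]
      calc ‖(Pk - P) (x - P x)‖ ≤ ‖Pk - P‖ * ‖x - P x‖ := (Pk - P).le_opNorm _
        _ ≤ ‖Pk - P‖ * ‖x‖ :=
          mul_le_mul_of_nonneg_left (norm_sub_projCLM_le T x) (norm_nonneg _)
    -- combine
    have hbound1 : ‖B k ∘L ((A - Ak) ∘L Bt)‖ ≤ b1 * (((2 * ‖Γt‖ + 2) * m) * bc) := by
      refine comp_norm_le₂ hBknorm (comp_norm_le₂ ?_ hBtnorm ?_) hb1p.le
      · rw [norm_sub_rev]; exact hAkA
      · positivity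
    have hbound2 : ‖(Pk - P) ∘L Bt‖ ≤ m * bc := comp_norm_le₂ hδm hBtnorm hm0
    have hbound3 : ‖B k ∘L (Pk - Pk ∘L P)‖ ≤ b1 * m := comp_norm_le₂ hBknorm hthird hb1p.le
    have htotal : ‖B k - Bt‖ ≤ b1 * (((2 * ‖Γt‖ + 2) * m) * bc) + m * bc + b1 * m := by
      have u1 := norm_add_le (B k ∘L ((A - Ak) ∘L Bt) + (Pk - P) ∘L Bt)
        (B k ∘L (Pk - Pk ∘L P))
      have u2 := norm_add_le (B k ∘L ((A - Ak) ∘L Bt)) ((Pk - P) ∘L Bt)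
      rw [hid]
      linarith
    rw [← hm, hCdef]
    calc ‖B k - Bt‖ ≤ b1 * (((2 * ‖Γt‖ + 2) * m) * bc) + m * bc + b1 * m := htotal
      _ = (b1 * ((2 * ‖Γt‖ + 2) * bc) + bc + b1) * m := by ring
      _ ≤ (b1 * ((2 * ‖Γt‖ + 2) * bc) + bc + b1 + 1) * m :=
        mul_le_mul_of_nonneg_right (by linarith) hm0
  refine ⟨?_, C, hC0, K, key⟩
  have hη0 : Tendsto (fun k => ‖Γ k - Γt‖) atTop (𝓝 0) :=
    tendsto_iff_norm_sub_tendsto_zero.mp hΓ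
  have hδ0 : Tendsto (fun k => ‖projCLM (Tk k) - projCLM T‖) atTop (𝓝 0) :=
    tendsto_iff_norm_sub_tendsto_zero.mp hT
  have hmax0 : Tendsto
      (fun k => C * max ‖Γ k - Γt‖ ‖projCLM (Tk k) - projCLM T‖) atTop (𝓝 0) := by
    have h1 := (hη0.max hδ0).const_mul C
    simpa only [max_self, mul_zero] using h1
  rw [tendsto_iff_norm_sub_tendsto_zero]
  refine squeeze_zero' (Filter.Eventually.of_forall fun k => norm_nonneg _) ?_ hmax0
  exact Filter.eventually_atTop.mpr ⟨K, key⟩
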